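/- Let n ≥ 1, let τ ∈ L²(ℝⁿ×ℝⁿ) be a kernel whose integral operator is positive semidefinite, and let g : ℝⁿ → ℂ be a Lebesgue measurable function. Define κ(x,y) = τ(x,y)·g(x)·conj(g(y)). If κ ∈ L²(ℝⁿ×ℝⁿ), then the integral operator of κ is positive semidefinite. -/

import Mathlib

open MeasureTheory Matrix Complex

noncomputable section

/-- The Gaussian function `θ(A,B,C)(x,y) =
  exp(−(x−y)ᵀA(x−y) − i·(x−y)ᵀB(x+y) − (x+y)ᵀC(x+y))`. -/
def theta {n : ℕ} (A B C : Matrix (Fin n) (Fin n) ℝ) (x y : Fin n → ℝ) : ℂ :=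
  Complex.exp (-((((x - y) ⬝ᵥ A.mulVec (x - y)) : ℝ) : ℂ)
    - Complex.I * ((((x - y) ⬝ᵥ B.mulVec (x + y)) : ℝ) : ℂ)
    - ((((x + y) ⬝ᵥ C.mulVec (x + y)) : ℝ) : ℂ))

/-- The integral operator of the kernel `κ` is positive semidefinite: for every
`f ∈ L²(ℝⁿ,ℂ)`, the integral `∬ κ(x,y) f(y) conj(f(x)) dy dx` is a nonnegative real. -/
def IsPosKernel {n : ℕ} (κ : (Fin n → ℝ) → (Fin n → ℝ) → ℂ) : Prop :=
  ∀ f : (Fin n → ℝ) → ℂ, MemLp f 2 volume →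
    0 ≤ (∫ x, ∫ y, κ x y * f y * (starRingEnd ℂ) (f x)).re ∧
      (∫ x, ∫ y, κ x y * f y * (starRingEnd ℂ) (f x)).im = 0

/-- Evaluation of a polynomial in `2n` variables with complex coefficients at real points. -/
def evalP {n : ℕ} (p : MvPolynomial (Fin n ⊕ Fin n) ℂ) (x y : Fin n → ℝ) : ℂ :=
  MvPolynomial.eval (Sum.elim (fun i => ((x i : ℝ) : ℂ)) (fun i => ((y i : ℝ) : ℂ))) p
open Filter Set in
theorem posKernel_of_conjugation_by_measurable_function
    {n : ℕ} (hn : 1 ≤ n) (τ : (Fin n → ℝ) → (Fin n → ℝ) → ℂ)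
    (hτL2 : MemLp (fun q : (Fin n → ℝ) × (Fin n → ℝ) => τ q.1 q.2) 2 volume)
    (hτpos : IsPosKernel τ)
    (g : (Fin n → ℝ) → ℂ) (hg : Measurable g)
    (hκL2 : MemLp
      (fun q : (Fin n → ℝ) × (Fin n → ℝ) => τ q.1 q.2 * g q.1 * (starRingEnd ℂ) (g q.2))
      2 volume) :
    IsPosKernel (fun x y => τ x y * g x * (starRingEnd ℂ) (g y)) := by
  classical
  intro f hf
  -- the conjugated function
  set h : (Fin n → ℝ) → ℂ := fun x => (starRingEnd ℂ) (g x) * f x with hh_def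
  have hconj_meas : Measurable fun x => (starRingEnd ℂ) (g x) := by
    exact continuous_star.measurable.comp hg
  have hh_aesm : AEStronglyMeasurable h volume :=
    hconj_meas.aestronglyMeasurable.mul hf.1
  -- the kernel on the product space
  set K : (Fin n → ℝ) × (Fin n → ℝ) → ℂ :=
    fun q => τ q.1 q.2 * g q.1 * (starRingEnd ℂ) (g q.2) * f q.2 * (starRingEnd ℂ) (f q.1)
    with hK_def
  -- `K` is integrable on the product space
  have hsq : Integrable (fun x => ‖f x‖ ^ 2) volume :=
    (memLp_two_iff_integrable_sq_norm hf.1).mp hf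
  have hm_aesm : AEStronglyMeasurable
      (fun q : (Fin n → ℝ) × (Fin n → ℝ) => f q.2 * (starRingEnd ℂ) (f q.1)) volume := by
    rw [Measure.volume_eq_prod]
    exact (hf.1.comp_quasiMeasurePreserving Measure.quasiMeasurePreserving_snd).mul
      (((Complex.continuous_conj.comp_aestronglyMeasurable hf.1)
        ).comp_quasiMeasurePreserving Measure.quasiMeasurePreserving_fst)
  have hm : MemLp (fun q : (Fin n → ℝ) × (Fin n → ℝ) => f q.2 * (starRingEnd ℂ) (f q.1))
      2 volume := by
    rw [memLp_two_iff_integrable_sq_norm hm_aesm]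
    have hprod : Integrable
        (fun q : (Fin n → ℝ) × (Fin n → ℝ) => ‖f q.1‖ ^ 2 * ‖f q.2‖ ^ 2) volume := by
      rw [Measure.volume_eq_prod]; exact hsq.mul_prod hsq
    refine hprod.congr (Filter.Eventually.of_forall fun q => ?_)
    simp [norm_mul, RCLike.norm_conj]
    ring
  have hK_int : Integrable K volume := by
    have h1 : MemLp
        ((fun q : (Fin n → ℝ) × (Fin n → ℝ) => τ q.1 q.2 * g q.1 * (starRingEnd ℂ) (g q.2)) •
          fun q : (Fin n → ℝ) × (Fin n → ℝ) => f q.2 * (starRingEnd ℂ) (f q.1)) 1 volume :=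
      hm.smul hκL2 (hpqr := ⟨by rw [inv_one, ENNReal.inv_two_add_inv_two]⟩)
    rw [← memLp_one_iff_integrable]
    have he : K = (fun q : (Fin n → ℝ) × (Fin n → ℝ) =>
        τ q.1 q.2 * g q.1 * (starRingEnd ℂ) (g q.2)) •
          fun q : (Fin n → ℝ) × (Fin n → ℝ) => f q.2 * (starRingEnd ℂ) (f q.1) := by
      funext q
      simp only [hK_def, Pi.smul_apply', smul_eq_mul]
      ring
    rw [he]
    exact h1
  -- truncation sets
  set S : ℕ → Set (Fin n → ℝ) := fun N => {x | ‖g x‖ ≤ N} with hS_def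
  have hSmeas : ∀ N, MeasurableSet (S N) := fun N =>
    measurableSet_le hg.norm measurable_const
  -- truncated conjugated functions
  set hN : ℕ → (Fin n → ℝ) → ℂ := fun N => (S N).indicator h with hhN_def
  have hhN_mem : ∀ N, MemLp (hN N) 2 volume := by
    intro N
    refine MemLp.of_le (hf.const_mul ((N : ℂ))) (hh_aesm.indicator (hSmeas N))
      (Filter.Eventually.of_forall fun x => ?_)
    simp only [hhN_def]
    by_cases hx : x ∈ S N
    · rw [Set.indicator_of_mem hx]
      simp only [hh_def, norm_mul, RCLike.norm_conj, Complex.norm_natCast]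
      exact mul_le_mul_of_nonneg_right hx (norm_nonneg _)
    · rw [Set.indicator_of_notMem hx]
      simp only [norm_zero]
      positivity
  -- truncated kernels on the product space
  set KN : ℕ → (Fin n → ℝ) × (Fin n → ℝ) → ℂ := fun N => ((S N) ×ˢ (S N)).indicator K
    with hKN_def
  have hKN_int : ∀ N, Integrable (KN N) volume := fun N =>
    hK_int.indicator ((hSmeas N).prod (hSmeas N))
  -- pointwise identity between truncated kernels and truncated functions
  have key : ∀ N x y, τ x y * hN N y * (starRingEnd ℂ) (hN N x) = KN N (x, y) := by
    intro N x y
    by_cases hx : x ∈ S N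
    · by_cases hy : y ∈ S N
      · rw [hKN_def]
        simp only [hhN_def, Set.indicator_of_mem hx, Set.indicator_of_mem hy,
          Set.indicator_of_mem (Set.mk_mem_prod hx hy), hK_def, hh_def, _root_.map_mul,
          Complex.conj_conj]
        ring
      · rw [hKN_def]
        have : (x, y) ∉ (S N) ×ˢ (S N) := fun hc => hy hc.2
        simp [hhN_def, Set.indicator_of_notMem hy, Set.indicator_of_notMem this]
    · rw [hKN_def]
      have : (x, y) ∉ (S N) ×ˢ (S N) := fun hc => hx hc.1
      simp [hhN_def, Set.indicator_of_notMem hx, Set.indicator_of_notMem this]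
  -- the iterated integrals of the truncated kernels equal the product integrals
  have hiter : ∀ N, (∫ x, ∫ y, τ x y * hN N y * (starRingEnd ℂ) (hN N x)) =
      ∫ q, KN N q ∂(volume : Measure ((Fin n → ℝ) × (Fin n → ℝ))) := by
    intro N
    have h1 : (∫ x, ∫ y, τ x y * hN N y * (starRingEnd ℂ) (hN N x)) =
        ∫ x, ∫ y, KN N (x, y) := by
      congr 1; funext x; congr 1; funext y; exact key N x y
    rw [h1]
    have h2 : Integrable (Function.uncurry fun x y => KN N (x, y))
        ((volume : Measure (Fin n → ℝ)).prod volume) := by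
      have := hKN_int N
      rw [Measure.volume_eq_prod] at this
      exact this.congr (Filter.Eventually.of_forall fun q => rfl)
    rw [MeasureTheory.integral_integral h2, ← Measure.volume_eq_prod]
  -- the iterated integral in the goal equals the product integral of K
  have hgoal : (∫ x, ∫ y, τ x y * g x * (starRingEnd ℂ) (g y) * f y * (starRingEnd ℂ) (f x)) =
      ∫ q, K q ∂(volume : Measure ((Fin n → ℝ) × (Fin n → ℝ))) := by
    have h2 : Integrable (Function.uncurry fun x y => K (x, y))
        ((volume : Measure (Fin n → ℝ)).prod volume) := by
      have := hK_int
      rw [Measure.volume_eq_prod] at this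
      exact this.congr (Filter.Eventually.of_forall fun q => rfl)
    have h3 := MeasureTheory.integral_integral h2
    rw [← Measure.volume_eq_prod] at h3
    exact h3
  -- dominated convergence
  have htend : Tendsto (fun N => ∫ q, KN N q ∂(volume : Measure ((Fin n → ℝ) × (Fin n → ℝ))))
      atTop (nhds (∫ q, K q ∂(volume : Measure ((Fin n → ℝ) × (Fin n → ℝ))))) := by
    refine tendsto_integral_of_dominated_convergence (fun q => ‖K q‖)
      (fun N => (hKN_int N).1) hK_int.norm
      (fun N => Filter.Eventually.of_forall fun q => norm_indicator_le_norm_self K q)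
      (Filter.Eventually.of_forall fun q => ?_)
    have hev : ∀ᶠ N in atTop, KN N q = K q := by
      filter_upwards [eventually_ge_atTop (max ⌈‖g q.1‖⌉₊ ⌈‖g q.2‖⌉₊)] with N hNle
      have h1 : ‖g q.1‖ ≤ (N : ℝ) :=
        (Nat.le_ceil _).trans (Nat.cast_le.mpr ((le_max_left _ _).trans hNle))
      have h2 : ‖g q.2‖ ≤ (N : ℝ) :=
        (Nat.le_ceil _).trans (Nat.cast_le.mpr ((le_max_right _ _).trans hNle))
      have hq : q ∈ (S N) ×ˢ (S N) := Set.mem_prod.mpr ⟨h1, h2⟩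
      simp only [hKN_def]
      exact Set.indicator_of_mem hq K
    exact Tendsto.congr' (hev.mono fun N hN => hN.symm) tendsto_const_nhds
  -- positivity of the truncated integrals
  have hposN : ∀ N, 0 ≤ (∫ q, KN N q ∂(volume : Measure ((Fin n → ℝ) × (Fin n → ℝ)))).re ∧
      (∫ q, KN N q ∂(volume : Measure ((Fin n → ℝ) × (Fin n → ℝ)))).im = 0 := by
    intro N
    have := hτpos (hN N) (hhN_mem N)
    rw [hiter N] at this
    exact this
  -- conclude
  have hre : Tendsto (fun N =>
      (∫ q, KN N q ∂(volume : Measure ((Fin n → ℝ) × (Fin n → ℝ)))).re) atTop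
      (nhds ((∫ q, K q ∂(volume : Measure ((Fin n → ℝ) × (Fin n → ℝ)))).re)) :=
    (Complex.continuous_re.tendsto _).comp htend
  have him : Tendsto (fun N =>
      (∫ q, KN N q ∂(volume : Measure ((Fin n → ℝ) × (Fin n → ℝ)))).im) atTop
      (nhds ((∫ q, K q ∂(volume : Measure ((Fin n → ℝ) × (Fin n → ℝ)))).im)) :=
    (Complex.continuous_im.tendsto _).comp htend
  constructor
  · rw [hgoal]
    exact ge_of_tendsto' hre fun N => (hposN N).1
  · rw [hgoal]
    refine tendsto_nhds_unique him ?_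
    have he : (fun N => (∫ q, KN N q ∂(volume : Measure ((Fin n → ℝ) × (Fin n → ℝ)))).im) =
        fun _ => (0 : ℝ) := funext fun N => (hposN N).2
    rw [he]
    exact tendsto_const_nhds
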